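/- Let q₁, q₂ > 0, K > 0, and c ∈ (0,1). Define G(y) := q₂/y + q₁/(1 − y) + (q₁ − q₂) log( y/(1 − y) ) − ( q₂/c + q₁/(1 − c) + (q₁ − q₂) log( c/(1 − c) ) ) for y ∈ (0,1). Then the limit as x → 1⁻ of ∫_c^x exp( K · G(y) ) dy equals +∞. In particular, for c < x < 1, ∫_c^x exp( K · G(y) ) dy ≥ K ( q₂ log(x) − q₁ log(1 − x) + (q₁ − q₂)( x log(x) + (1 − x) log(1 − x) ) − C ) for a constant C depending only on q₁, q₂, c, and the lower bound tends to +∞ as x → 1⁻. -/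

import Mathlib

open Filter intervalIntegral

/-- The explicit value of the inner integral in the scale function of the
mean-reverting filter SDE. -/
noncomputable def scaleExponent (q₁ q₂ c : ℝ) (y : ℝ) : ℝ :=
  q₂ / y + q₁ / (1 - y) + (q₁ - q₂) * Real.log (y / (1 - y))
    - (q₂ / c + q₁ / (1 - c) + (q₁ - q₂) * Real.log (c / (1 - c)))

/-- Divergence of the scale function at the right endpoint: `p(x) = ∫_c^x exp(K G(y)) dy`
tends to `+∞` as `x → 1⁻`; in particular the integral dominates the explicit expression
`K (q₂ log x - q₁ log(1-x) + (q₁-q₂)(x log x + (1-x) log(1-x)) - C)` for a constant `C`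
depending only on `q₁, q₂, c`, and this lower bound tends to `+∞` as `x → 1⁻`. -/
theorem scale_function_diverges_at_one (q₁ q₂ K c : ℝ)
    (hq₁ : 0 < q₁) (hq₂ : 0 < q₂) (hK : 0 < K) (hc : c ∈ Set.Ioo (0 : ℝ) 1) :
    Tendsto (fun x : ℝ => ∫ y in c..x, Real.exp (K * scaleExponent q₁ q₂ c y))
      (nhdsWithin 1 (Set.Iio 1)) atTop ∧
    ∃ C : ℝ,
      (∀ x : ℝ, c < x → x < 1 →
        (∫ y in c..x, Real.exp (K * scaleExponent q₁ q₂ c y)) ≥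
          K * (q₂ * Real.log x - q₁ * Real.log (1 - x)
            + (q₁ - q₂) * (x * Real.log x + (1 - x) * Real.log (1 - x)) - C)) ∧
      Tendsto (fun x : ℝ => K * (q₂ * Real.log x - q₁ * Real.log (1 - x)
            + (q₁ - q₂) * (x * Real.log x + (1 - x) * Real.log (1 - x)) - C))
        (nhdsWithin 1 (Set.Iio 1)) atTop := by
  obtain ⟨hc0, hc1⟩ := hc
  set D : ℝ := q₂ / c + q₁ / (1 - c) + (q₁ - q₂) * Real.log (c / (1 - c)) with hD
  set H : ℝ → ℝ := fun x => q₂ * Real.log x - q₁ * Real.log (1 - x)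
      + (q₁ - q₂) * (x * Real.log x + (1 - x) * Real.log (1 - x)) with hH
  set C : ℝ := H c + |1 - K * D| / K with hCdef
  -- continuity of the integrand on (0,1)
  have hcontG : ContinuousOn (fun y => K * scaleExponent q₁ q₂ c y) (Set.Ioo (0:ℝ) 1) := by
    apply ContinuousOn.mul continuousOn_const
    unfold scaleExponent
    apply ContinuousOn.sub ?_ continuousOn_const
    apply ContinuousOn.add
    apply ContinuousOn.add
    · exact ContinuousOn.div continuousOn_const continuousOn_id (fun y hy => ne_of_gt hy.1)
    · exact ContinuousOn.div continuousOn_const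
        (continuousOn_const.sub continuousOn_id) (fun y hy => by
          simp only [Set.mem_Ioo] at hy; intro h; linarith [hy.2, sub_eq_zero.mp h])
    · refine continuousOn_const.mul (ContinuousOn.log ?_ ?_)
      · exact ContinuousOn.div continuousOn_id (continuousOn_const.sub continuousOn_id)
          (fun y hy => by intro h; have := sub_eq_zero.mp h; linarith [hy.2])
      · intro y hy
        exact div_ne_zero (ne_of_gt hy.1) (by have := hy.2; intro h; have := sub_eq_zero.mp h; linarith)
  -- derivative of the antiderivative
  have hderiv : ∀ y ∈ Set.Ioo (0:ℝ) 1,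
      HasDerivAt (fun y => K * H y + (1 - K * D) * y)
        (K * scaleExponent q₁ q₂ c y + 1) y := by
    intro y hy
    obtain ⟨hy0, hy1⟩ := hy
    have hy0' : y ≠ 0 := ne_of_gt hy0
    have h1y : (0:ℝ) < 1 - y := by linarith
    have h1y' : (1:ℝ) - y ≠ 0 := ne_of_gt h1y
    have dlog : HasDerivAt Real.log y⁻¹ y := Real.hasDerivAt_log hy0'
    have dsub : HasDerivAt (fun y : ℝ => 1 - y) (-1) y := by
      simpa using (hasDerivAt_id y).const_sub 1
    have dlog1 : HasDerivAt (fun y : ℝ => Real.log (1 - y)) ((1 - y)⁻¹ * -1) y :=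
      (Real.hasDerivAt_log h1y').comp y dsub
    have dxlog : HasDerivAt (fun y : ℝ => y * Real.log y) (1 * Real.log y + y * y⁻¹) y :=
      (hasDerivAt_id y).mul dlog
    have d1xlog : HasDerivAt (fun y : ℝ => (1 - y) * Real.log (1 - y))
        (-1 * Real.log (1 - y) + (1 - y) * ((1 - y)⁻¹ * -1)) y := dsub.mul dlog1
    have dH : HasDerivAt H
        (q₂ * y⁻¹ - q₁ * ((1 - y)⁻¹ * -1)
          + (q₁ - q₂) * ((1 * Real.log y + y * y⁻¹) + (-1 * Real.log (1 - y) + (1 - y) * ((1 - y)⁻¹ * -1)))) y := by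
      exact ((dlog.const_mul q₂).sub (dlog1.const_mul q₁)).add ((dxlog.add d1xlog).const_mul (q₁ - q₂))
    have dφ := ((dH.const_mul K).add ((hasDerivAt_id y).const_mul (1 - K * D)))
    refine dφ.congr_deriv ?_
    unfold scaleExponent
    rw [Real.log_div hy0' h1y', ← hD]
    field_simp
    ring
  -- main lower bound
  have hbound : ∀ x : ℝ, c < x → x < 1 →
      (∫ y in c..x, Real.exp (K * scaleExponent q₁ q₂ c y)) ≥ K * (H x - C) := by
    intro x hcx hx1
    have hsub : Set.uIcc c x ⊆ Set.Ioo (0:ℝ) 1 := by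
      rw [Set.uIcc_of_le hcx.le]
      intro y hy
      exact ⟨lt_of_lt_of_le hc0 hy.1, lt_of_le_of_lt hy.2 hx1⟩
    have hcontG' : ContinuousOn (fun y => K * scaleExponent q₁ q₂ c y + 1) (Set.uIcc c x) :=
      ((hcontG.mono hsub).add continuousOn_const)
    have hint1 : IntervalIntegrable (fun y => K * scaleExponent q₁ q₂ c y + 1) MeasureTheory.volume c x :=
      hcontG'.intervalIntegrable
    have hint2 : IntervalIntegrable (fun y => Real.exp (K * scaleExponent q₁ q₂ c y)) MeasureTheory.volume c x :=
      (Real.continuous_exp.comp_continuousOn (hcontG.mono hsub)).intervalIntegrable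
    have hmono : (∫ y in c..x, Real.exp (K * scaleExponent q₁ q₂ c y)) ≥
        ∫ y in c..x, (K * scaleExponent q₁ q₂ c y + 1) := by
      apply intervalIntegral.integral_mono_on hcx.le hint1 hint2
      intro y _
      exact Real.add_one_le_exp _
    have hftc : (∫ y in c..x, (K * scaleExponent q₁ q₂ c y + 1)) =
        (K * H x + (1 - K * D) * x) - (K * H c + (1 - K * D) * c) := by
      apply intervalIntegral.integral_eq_sub_of_hasDerivAt
      · intro y hy
        exact hderiv y (hsub hy)
      · exact hint1
    have habs : (1 - K * D) * (x - c) ≥ -|1 - K * D| := by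
      have h1 : |(1 - K * D) * (x - c)| ≤ |1 - K * D| := by
        rw [abs_mul]
        have : |x - c| ≤ 1 := by rw [abs_of_nonneg (by linarith)]; linarith
        nlinarith [abs_nonneg (1 - K * D)]
      linarith [neg_abs_le ((1 - K * D) * (x - c)), abs_nonneg ((1 - K * D) * (x - c)),
        (neg_le_neg h1)]
    have hC : K * (H x - C) = K * H x - K * H c - |1 - K * D| := by
      rw [hCdef]; field_simp; ring
    calc (∫ y in c..x, Real.exp (K * scaleExponent q₁ q₂ c y))
        ≥ (K * H x + (1 - K * D) * x) - (K * H c + (1 - K * D) * c) := by rw [← hftc]; exact hmono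
      _ ≥ K * (H x - C) := by rw [hC]; nlinarith [habs]
  -- the bound tends to atTop
  have htendH : Tendsto H (nhdsWithin 1 (Set.Iio 1)) atTop := by
    have tA : Tendsto (fun x : ℝ => q₂ * Real.log x
        + (q₁ - q₂) * (x * Real.log x + (1 - x) * Real.log (1 - x))) (nhdsWithin 1 (Set.Iio 1)) (nhds 0) := by
      have c1 : ContinuousAt (fun x : ℝ => q₂ * Real.log x
          + (q₁ - q₂) * (x * Real.log x + (1 - x) * Real.log (1 - x))) 1 := by
        apply ContinuousAt.add
        · exact continuousAt_const.mul (Real.continuousAt_log one_ne_zero)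
        · apply continuousAt_const.mul
          apply ContinuousAt.add
          · exact Real.continuous_mul_log.continuousAt
          · exact (Real.continuous_mul_log.comp (continuous_const.sub continuous_id)).continuousAt
      have h := c1.tendsto.mono_left (nhdsWithin_le_nhds (s := Set.Iio (1:ℝ)))
      simpa using h
    have tB : Tendsto (fun x : ℝ => -(q₁ * Real.log (1 - x))) (nhdsWithin 1 (Set.Iio 1)) atTop := by
      have t2 : Tendsto (fun x : ℝ => 1 - x) (nhdsWithin 1 (Set.Iio 1)) (nhdsWithin 0 (Set.Ioi 0)) := by
        rw [tendsto_nhdsWithin_iff]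
        constructor
        · have h : Tendsto (fun x : ℝ => 1 - x) (nhds 1) (nhds 0) := by
            have h2 := ((continuous_const (y := (1:ℝ))).sub continuous_id).tendsto (1:ℝ)
            simpa [Pi.sub_def] using h2
          exact h.mono_left nhdsWithin_le_nhds
        · filter_upwards [self_mem_nhdsWithin] with x hx
          simp only [Set.mem_Iio] at hx
          exact Set.mem_Ioi.mpr (by linarith)
      have t3 : Tendsto (fun x : ℝ => Real.log (1 - x)) (nhdsWithin 1 (Set.Iio 1)) atBot :=
        Real.tendsto_log_nhdsGT_zero.comp t2
      have t4 : Tendsto (fun x : ℝ => -Real.log (1 - x)) (nhdsWithin 1 (Set.Iio 1)) atTop :=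
        tendsto_neg_atTop_iff.mpr t3
      have := t4.const_mul_atTop hq₁
      simpa [mul_comm, neg_mul, mul_neg] using this
    have : Tendsto (fun x : ℝ => (q₂ * Real.log x
        + (q₁ - q₂) * (x * Real.log x + (1 - x) * Real.log (1 - x))) + -(q₁ * Real.log (1 - x)))
        (nhdsWithin 1 (Set.Iio 1)) atTop := tA.add_atTop tB
    apply this.congr
    intro x; rw [hH]; ring
  have htendBound : Tendsto (fun x : ℝ => K * (H x - C)) (nhdsWithin 1 (Set.Iio 1)) atTop := by
    have h1 : Tendsto (fun x : ℝ => H x - C) (nhdsWithin 1 (Set.Iio 1)) atTop :=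
      tendsto_atTop_add_const_right _ (-C) htendH
    exact h1.const_mul_atTop hK
  refine ⟨?_, C, hbound, htendBound⟩
  apply tendsto_atTop_mono' _ _ htendBound
  have hev1 : ∀ᶠ x : ℝ in nhdsWithin 1 (Set.Iio 1), x < 1 := by
    filter_upwards [self_mem_nhdsWithin] with x hx using hx
  have hev2 : ∀ᶠ x : ℝ in nhdsWithin 1 (Set.Iio 1), c < x :=
    (eventually_gt_nhds hc1).filter_mono nhdsWithin_le_nhds
  filter_upwards [hev1, hev2] with x hx1 hx2
  exact hbound x hx2 hx1
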